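/- arXiv:2012.07068 — 6 statements merged into one kernel-verified Lean document; each statement's English description precedes it below -/
import Mathlib

section
/- For 0 < ν < 1 and t > 0, the two series representations of the Mainardi function M_ν agree: ∑_{k=0}^∞ (-t)^k / (k! · Γ(-ν(k+1)+1)) = (1/π) ∑_{k=1}^∞ ((-t)^{k-1} / (k-1)!) · Γ(νk) · sin(πνk). -/
open Real MeasureTheory Set

theorem mainardi_M_series_agree (ν t : ℝ) (hν0 : 0 < ν) (hν1 : ν < 1) (ht : 0 < t) :
    ∑' k : ℕ, (-t) ^ k / (k.factorial * Real.Gamma (-ν * (k + 1) + 1)) =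
      (1 / π) * ∑' k : ℕ,
        ((-t) ^ k / k.factorial) * Real.Gamma (ν * (k + 1)) * Real.sin (π * ν * (k + 1)) := by
  rw [← tsum_mul_left]
  refine tsum_congr fun k => ?_
  set s : ℝ := ν * (k + 1) with hs
  have hs0 : 0 < s := by positivity
  have hG : Real.Gamma s ≠ 0 := (Real.Gamma_pos_of_pos hs0).ne'
  have hrefl := Real.Gamma_mul_Gamma_one_sub s
  have h1 : -ν * (k + 1) + 1 = 1 - s := by ring
  have hpi : π * ν * (k + 1) = π * s := by ring
  rw [h1, hpi]
  by_cases hsin : Real.sin (π * s) = 0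
  · have hG1 : Real.Gamma (1 - s) = 0 := by
      rcases mul_eq_zero.mp (by rw [hrefl, hsin, div_zero]) with h | h
      · exact absurd h hG
      · exact h
    rw [hG1, hsin]
    simp
  · have hG1 : Real.Gamma (1 - s) = π / (Real.sin (π * s) * Real.Gamma s) := by
      field_simp at hrefl ⊢
      linarith [hrefl]
    rw [hG1]
    have hk : (k.factorial : ℝ) ≠ 0 := Nat.cast_ne_zero.mpr k.factorial_ne_zero
    field_simp
end

section
/- For 0 < ν < 1 and all t, the Mainardi functions satisfy F_ν(t) = ν · t · M_ν(t). -/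
open Real MeasureTheory Set

noncomputable def mainardiF (ν t : ℝ) : ℝ :=
  ∑' k : ℕ, (-t) ^ (k + 1) / ((k + 1).factorial * Real.Gamma (-ν * (k + 1)))

noncomputable def mainardiM (ν t : ℝ) : ℝ :=
  ∑' k : ℕ, (-t) ^ k / (k.factorial * Real.Gamma (-ν * (k + 1) + 1))

theorem mainardi_F_eq_nu_t_M (ν : ℝ) (hν0 : 0 < ν) (hν1 : ν < 1) (t : ℝ) :
    mainardiF ν t = ν * t * mainardiM ν t := by
  unfold mainardiF mainardiM
  rw [← tsum_mul_left]
  refine tsum_congr fun k => ?_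
  have hx : (-ν * (k + 1) : ℝ) ≠ 0 := by
    have : (0:ℝ) < (k:ℝ) + 1 := by positivity
    nlinarith
  rw [Real.Gamma_add_one hx]
  rcases eq_or_ne (Real.Gamma (-ν * (k + 1))) 0 with h | h
  · rw [neg_mul] at h
    simp [neg_mul, h]
  · have hf : ((k.factorial : ℝ)) ≠ 0 := Nat.cast_ne_zero.mpr k.factorial_ne_zero
    have hf1 : (((k+1).factorial : ℝ)) ≠ 0 := Nat.cast_ne_zero.mpr (k+1).factorial_ne_zero
    have hfac : (((k+1).factorial : ℝ)) = ((k:ℝ)+1) * (k.factorial : ℝ) := by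
      push_cast [Nat.factorial_succ]; ring
    rw [hfac, ← mul_div_assoc, div_eq_div_iff (mul_ne_zero (mul_ne_zero (by positivity) hf) h) (by
      exact mul_ne_zero hf (mul_ne_zero hx h))]
    ring
end

section
/- Let 0 < ν < 1 and μ < 1, and f_{ν,μ} the inverse Laplace transform of s^{-μ}e^{-s^ν}. Then t · f_{ν,μ-1}(t) = (μ-1) f_{ν,μ}(t) + ν f_{ν,μ-ν}(t) for all t > 0; equivalently, t · d f_{ν,μ}(t)/dt = (μ-1) f_{ν,μ}(t) + ν f_{ν,μ-ν}(t). -/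
open Real MeasureTheory Set

noncomputable def fInv (ν ρ t : ℝ) : ℝ :=
  (1 / π) * ∫ u in Ioi (0 : ℝ),
    u ^ (-ρ) * Real.exp (-u * t - u ^ ν * Real.cos (π * ν)) *
      Real.sin (u ^ ν * Real.sin (π * ν) + π * ρ)

namespace FInvAux

open Filter

/-- The integrand of `fInv`. -/
noncomputable def G (ν ρ x u : ℝ) : ℝ :=
  u ^ (-ρ) * Real.exp (-u * x - u ^ ν * Real.cos (π * ν)) *
    Real.sin (u ^ ν * Real.sin (π * ν) + π * ρ)

lemma fInv_eq (ν ρ t : ℝ) : fInv ν ρ t = (1 / π) * ∫ u in Ioi (0 : ℝ), G ν ρ t u := rfl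

lemma rpow_le_linear {ν : ℝ} (hν0 : 0 < ν) (hν1 : ν < 1) {a : ℝ} (ha : 0 < a) :
    ∃ C : ℝ, ∀ u : ℝ, 0 < u → u ^ ν ≤ a * u + C := by
  set ε : ℝ := a ^ ((1 - ν)⁻¹) with hε
  have hεpos : 0 < ε := rpow_pos_of_pos ha _
  have hne : (1 : ℝ) - ν ≠ 0 := by linarith
  have hεa : ε ^ ((1 : ℝ) - ν) = a := by
    rw [hε, ← rpow_mul ha.le, inv_mul_cancel₀ hne, rpow_one]
  refine ⟨ε ^ (-ν), fun u hu => ?_⟩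
  have hεu : 0 < ε * u := mul_pos hεpos hu
  have h1 : (ε * u) ^ ν ≤ 1 + ε * u := by
    rcases le_total (ε * u) 1 with h | h
    · have := rpow_le_one hεu.le h hν0.le
      linarith
    · calc (ε * u) ^ ν ≤ (ε * u) ^ (1 : ℝ) := rpow_le_rpow_of_exponent_le h hν1.le
        _ = ε * u := rpow_one _
        _ ≤ 1 + ε * u := by linarith
  have h2 : u ^ ν = ε ^ (-ν) * (ε * u) ^ ν := by
    rw [mul_rpow hεpos.le hu.le, ← mul_assoc, ← rpow_add hεpos, neg_add_cancel, rpow_zero,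
      one_mul]
  have h3 : ε ^ (-ν) * (ε * u) = a * u := by
    rw [← mul_assoc]
    congr 1
    calc ε ^ (-ν) * ε = ε ^ (-ν) * ε ^ (1 : ℝ) := by rw [rpow_one]
      _ = ε ^ ((1 : ℝ) - ν) := by rw [← rpow_add hεpos]; ring_nf
      _ = a := hεa
  have hεν : 0 < ε ^ (-ν) := rpow_pos_of_pos hεpos _
  calc u ^ ν = ε ^ (-ν) * (ε * u) ^ ν := h2
    _ ≤ ε ^ (-ν) * (1 + ε * u) := by
        exact mul_le_mul_of_nonneg_left h1 hεν.le
    _ = ε ^ (-ν) * (ε * u) + ε ^ (-ν) := by ring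
    _ = a * u + ε ^ (-ν) := by rw [h3]

lemma G_abs_le {ν : ℝ} (ρ : ℝ) {a C x u : ℝ}
    (hC : ∀ u : ℝ, 0 < u → u ^ ν ≤ a * u + C) (hx : 2 * a ≤ x) (hu : 0 < u) :
    |G ν ρ x u| ≤ Real.exp C * (u ^ (-ρ) * Real.exp (-(a * u))) := by
  have h0 : (0 : ℝ) ≤ u ^ (-ρ) := (rpow_pos_of_pos hu _).le
  have hνnn : (0 : ℝ) ≤ u ^ ν := (rpow_pos_of_pos hu _).le
  have hexp : Real.exp (-u * x - u ^ ν * Real.cos (π * ν)) ≤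
      Real.exp C * Real.exp (-(a * u)) := by
    rw [← Real.exp_add]
    apply Real.exp_le_exp.2
    have h2 : -(u ^ ν * Real.cos (π * ν)) ≤ u ^ ν := by
      have h : -(u ^ ν * Real.cos (π * ν)) ≤ |u ^ ν * Real.cos (π * ν)| := neg_le_abs _
      rw [abs_mul, abs_of_nonneg hνnn] at h
      nlinarith [Real.abs_cos_le_one (π * ν)]
    have h3 := hC u hu
    nlinarith [mul_le_mul_of_nonneg_left hx hu.le]
  calc |G ν ρ x u| = u ^ (-ρ) * Real.exp (-u * x - u ^ ν * Real.cos (π * ν)) *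
        |Real.sin (u ^ ν * Real.sin (π * ν) + π * ρ)| := by
        rw [G, abs_mul, abs_mul, abs_of_nonneg h0, abs_of_nonneg (Real.exp_pos _).le]
    _ ≤ u ^ (-ρ) * (Real.exp C * Real.exp (-(a * u))) * 1 := by
        apply mul_le_mul
        · exact mul_le_mul_of_nonneg_left hexp h0
        · exact Real.abs_sin_le_one _
        · exact abs_nonneg _
        · positivity
    _ = Real.exp C * (u ^ (-ρ) * Real.exp (-(a * u))) := by ring

lemma G_contOn (ν ρ x : ℝ) : ContinuousOn (G ν ρ x) (Ioi (0 : ℝ)) := by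
  have hν : ContinuousOn (fun u : ℝ => u ^ ν) (Ioi (0 : ℝ)) := fun u hu =>
    (Real.continuousAt_rpow_const u ν (Or.inl (ne_of_gt hu))).continuousWithinAt
  have hρ : ContinuousOn (fun u : ℝ => u ^ (-ρ)) (Ioi (0 : ℝ)) := fun u hu =>
    (Real.continuousAt_rpow_const u (-ρ) (Or.inl (ne_of_gt hu))).continuousWithinAt
  have h1 : ContinuousOn (fun u : ℝ => -u * x - u ^ ν * Real.cos (π * ν)) (Ioi (0 : ℝ)) :=
    ((continuous_id.neg.mul continuous_const).continuousOn).sub (hν.mul continuousOn_const)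
  have h2 : ContinuousOn (fun u : ℝ => u ^ ν * Real.sin (π * ν) + π * ρ) (Ioi (0 : ℝ)) :=
    (hν.mul continuousOn_const).add continuousOn_const
  exact (hρ.mul (Real.continuous_exp.comp_continuousOn h1)).mul
    (Real.continuous_sin.comp_continuousOn h2)

lemma G_aesm (ν ρ x : ℝ) :
    AEStronglyMeasurable (G ν ρ x) (volume.restrict (Ioi (0 : ℝ))) :=
  (G_contOn ν ρ x).aestronglyMeasurable measurableSet_Ioi

lemma integrable_base {ρ a : ℝ} (hρ : ρ < 1) (ha : 0 < a) :
    IntegrableOn (fun u : ℝ => u ^ (-ρ) * Real.exp (-(a * u))) (Ioi (0 : ℝ)) := by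
  have h := integrableOn_rpow_mul_exp_neg_mul_rpow (s := -ρ) (p := 1) (b := a)
    (by linarith) zero_lt_one ha
  refine h.congr_fun (fun u hu => ?_) measurableSet_Ioi
  simp only [Real.rpow_one, neg_mul]

lemma integrable_G {ν : ℝ} (hν0 : 0 < ν) (hν1 : ν < 1) {ρ x : ℝ} (hρ : ρ < 1) (hx : 0 < x) :
    IntegrableOn (G ν ρ x) (Ioi (0 : ℝ)) := by
  obtain ⟨C, hC⟩ := rpow_le_linear hν0 hν1 (a := x / 2) (by linarith)
  have hbase := (integrable_base hρ (show (0 : ℝ) < x / 2 by linarith)).const_mul (Real.exp C)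
  refine Integrable.mono' hbase (G_aesm ν ρ x) ?_
  rw [ae_restrict_iff' measurableSet_Ioi]
  filter_upwards with u hu
  rw [Real.norm_eq_abs]
  exact G_abs_le ρ hC (by linarith) hu

/-- The antiderivative whose total derivative gives the recurrence. -/
noncomputable def F (ν μ t u : ℝ) : ℝ :=
  u ^ (1 - μ) * Real.exp (-u * t - u ^ ν * Real.cos (π * ν)) *
    Real.sin (u ^ ν * Real.sin (π * ν) + π * μ)

lemma sin_shift₁ (z μ : ℝ) : Real.sin (z + π * (μ - 1)) = -Real.sin (z + π * μ) := by
  rw [show z + π * (μ - 1) = (z + π * μ) - π by ring, Real.sin_sub_pi]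

lemma sin_shift₂ (z μ ν : ℝ) : Real.sin (z + π * (μ - ν)) =
    Real.sin (z + π * μ) * Real.cos (π * ν) - Real.cos (z + π * μ) * Real.sin (π * ν) := by
  rw [show z + π * (μ - ν) = (z + π * μ) - π * ν by ring, Real.sin_sub]

lemma F_eq_neg_G (ν μ t u : ℝ) : F ν μ t u = -G ν (μ - 1) t u := by
  rw [F, G, show -(μ - 1) = 1 - μ by ring, sin_shift₁]
  ring

lemma hasDerivAt_F {ν μ : ℝ} (t : ℝ) {u : ℝ} (hu : 0 < u) :
    HasDerivAt (F ν μ t)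
      (t * G ν (μ - 1) t u - (μ - 1) * G ν μ t u - ν * G ν (μ - ν) t u) u := by
  have hune : u ≠ 0 := hu.ne'
  have h1 : HasDerivAt (fun u : ℝ => u ^ (1 - μ)) ((1 - μ) * u ^ (1 - μ - 1)) u :=
    Real.hasDerivAt_rpow_const (Or.inl hune)
  have h2 : HasDerivAt (fun u : ℝ => -u * t - u ^ ν * Real.cos (π * ν))
      (-t - ν * u ^ (ν - 1) * Real.cos (π * ν)) u := by
    have ha : HasDerivAt (fun u : ℝ => -u * t) (-t) u := by
      simpa using ((hasDerivAt_id u).neg.mul_const t)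
    exact ha.sub ((Real.hasDerivAt_rpow_const (Or.inl hune)).mul_const _)
  have h3 : HasDerivAt (fun u : ℝ => u ^ ν * Real.sin (π * ν) + π * μ)
      (ν * u ^ (ν - 1) * Real.sin (π * ν)) u :=
    ((Real.hasDerivAt_rpow_const (p := ν) (Or.inl hune)).mul_const _).add_const _
  have h4 := (h1.mul h2.exp).mul h3.sin
  refine h4.congr_deriv ?_
  have e1 : u ^ (-(μ - 1)) = u ^ (1 - μ) := by rw [show -(μ - 1) = 1 - μ by ring]
  have e2 : u ^ (-(μ - ν)) = u ^ (1 - μ) * u ^ (ν - 1) := by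
    rw [← rpow_add hu]; rw [show (1 - μ) + (ν - 1) = -(μ - ν) by ring]
  have e3 : u ^ (1 - μ - 1) = u ^ (-μ) := by rw [show 1 - μ - 1 = -μ by ring]
  simp only [G, sin_shift₁, sin_shift₂, e1, e2, e3, mul_one, Real.cos_pi, Real.sin_pi, Pi.mul_apply]
  ring

lemma F_zero {ν μ : ℝ} (hμ : μ < 1) (t : ℝ) : F ν μ t 0 = 0 := by
  rw [F, Real.zero_rpow (show (1 : ℝ) - μ ≠ 0 by linarith)]
  ring

lemma F_continuousAt_zero {ν μ : ℝ} (hν0 : 0 < ν) (hμ : μ < 1) (t : ℝ) :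
    ContinuousAt (F ν μ t) 0 := by
  have c1 : ContinuousAt (fun u : ℝ => u ^ (1 - μ)) 0 :=
    Real.continuousAt_rpow_const 0 _ (Or.inr (by linarith))
  have cν : ContinuousAt (fun u : ℝ => u ^ ν) 0 :=
    Real.continuousAt_rpow_const 0 _ (Or.inr hν0.le)
  have c2 : ContinuousAt (fun u : ℝ => -u * t - u ^ ν * Real.cos (π * ν)) 0 :=
    ((continuous_id.neg.mul continuous_const).continuousAt).sub (cν.mul continuousAt_const)
  have c3 : ContinuousAt (fun u : ℝ => u ^ ν * Real.sin (π * ν) + π * μ) 0 :=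
    (cν.mul continuousAt_const).add continuousAt_const
  exact (c1.mul (Real.continuous_exp.continuousAt.comp c2)).mul
    (Real.continuous_sin.continuousAt.comp c3)

lemma F_tendsto_atTop {ν μ : ℝ} (hν0 : 0 < ν) (hν1 : ν < 1) {t : ℝ} (ht : 0 < t) :
    Tendsto (F ν μ t) atTop (nhds 0) := by
  obtain ⟨C, hC⟩ := rpow_le_linear hν0 hν1 (a := t / 2) (by linarith)
  have hg : Tendsto (fun u : ℝ => Real.exp C * (u ^ (1 - μ) * Real.exp (-(t / 2) * u)))
      atTop (nhds 0) := by
    have := (tendsto_rpow_mul_exp_neg_mul_atTop_nhds_zero (1 - μ) (t / 2)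
      (by linarith)).const_mul (Real.exp C)
    simpa using this
  apply squeeze_zero_norm' _ hg
  filter_upwards [eventually_gt_atTop (0 : ℝ)] with u hu
  rw [Real.norm_eq_abs, F_eq_neg_G, abs_neg]
  calc |G ν (μ - 1) t u| ≤ Real.exp C * (u ^ (-(μ - 1)) * Real.exp (-(t / 2 * u))) :=
      G_abs_le (μ - 1) hC (by linarith) hu
    _ = Real.exp C * (u ^ (1 - μ) * Real.exp (-(t / 2) * u)) := by
      rw [show -(μ - 1) = 1 - μ by ring, neg_mul]

lemma key_integral {ν μ : ℝ} (hν0 : 0 < ν) (hν1 : ν < 1) (hμ : μ < 1) {t : ℝ}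
    (ht : 0 < t) :
    t * ∫ u in Ioi (0 : ℝ), G ν (μ - 1) t u =
      (μ - 1) * (∫ u in Ioi (0 : ℝ), G ν μ t u) +
        ν * ∫ u in Ioi (0 : ℝ), G ν (μ - ν) t u := by
  have i1 : IntegrableOn (G ν (μ - 1) t) (Ioi (0 : ℝ)) :=
    integrable_G hν0 hν1 (by linarith) ht
  have i2 : IntegrableOn (G ν μ t) (Ioi (0 : ℝ)) := integrable_G hν0 hν1 hμ ht
  have i3 : IntegrableOn (G ν (μ - ν) t) (Ioi (0 : ℝ)) :=
    integrable_G hν0 hν1 (by linarith) ht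
  have hFTC : (∫ u in Ioi (0 : ℝ),
      (t * G ν (μ - 1) t u - (μ - 1) * G ν μ t u - ν * G ν (μ - ν) t u)) = 0 := by
    have h := integral_Ioi_of_hasDerivAt_of_tendsto
      (f := F ν μ t)
      (f' := fun u => t * G ν (μ - 1) t u - (μ - 1) * G ν μ t u - ν * G ν (μ - ν) t u)
      (a := 0)
      ((F_continuousAt_zero hν0 hμ t).continuousWithinAt)
      (fun u hu => hasDerivAt_F t hu)
      (((i1.const_mul t).sub (i2.const_mul (μ - 1))).sub (i3.const_mul ν))
      (F_tendsto_atTop hν0 hν1 (μ := μ) ht)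
    rw [h, F_zero hμ t, sub_zero]
  have i12 : IntegrableOn (fun u => t * G ν (μ - 1) t u - (μ - 1) * G ν μ t u)
      (Ioi (0 : ℝ)) := (i1.const_mul t).sub (i2.const_mul (μ - 1))
  have i1' : IntegrableOn (fun u => t * G ν (μ - 1) t u) (Ioi (0 : ℝ)) := i1.const_mul t
  have i2' : IntegrableOn (fun u => (μ - 1) * G ν μ t u) (Ioi (0 : ℝ)) :=
    i2.const_mul (μ - 1)
  have i3' : IntegrableOn (fun u => ν * G ν (μ - ν) t u) (Ioi (0 : ℝ)) := i3.const_mul ν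
  rw [integral_sub i12 i3', integral_sub i1' i2',
    integral_const_mul, integral_const_mul, integral_const_mul] at hFTC
  linarith

lemma hasDerivAt_G_param {ν μ : ℝ} {u : ℝ} (hu : 0 < u) (x : ℝ) :
    HasDerivAt (fun x => G ν μ x u) (G ν (μ - 1) x u) x := by
  have h1 : HasDerivAt (fun x : ℝ => -u * x - u ^ ν * Real.cos (π * ν)) (-u) x := by
    simpa using (((hasDerivAt_id x).const_mul (-u)).sub_const (u ^ ν * Real.cos (π * ν)))
  have h2 := ((h1.exp.const_mul (u ^ (-μ))).mul_const
    (Real.sin (u ^ ν * Real.sin (π * ν) + π * μ)))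
  refine h2.congr_deriv ?_
  have e1 : u ^ (-(μ - 1)) = u * u ^ (-μ) := by
    rw [show -(μ - 1) = 1 + -μ by ring, rpow_add hu, rpow_one]
  simp only [G, sin_shift₁, e1]
  ring

lemma hasDerivAt_fInv {ν μ : ℝ} (hν0 : 0 < ν) (hν1 : ν < 1) (hμ : μ < 1) {t : ℝ}
    (ht : 0 < t) : HasDerivAt (fInv ν μ) (fInv ν (μ - 1) t) t := by
  obtain ⟨C, hC⟩ := rpow_le_linear hν0 hν1 (a := t / 4) (by linarith)
  have hbound : Integrable (fun u : ℝ => Real.exp C * (u ^ (-(μ - 1)) *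
      Real.exp (-(t / 4 * u)))) (volume.restrict (Ioi (0 : ℝ))) :=
    (integrable_base (show μ - 1 < 1 by linarith)
      (show (0 : ℝ) < t / 4 by linarith)).const_mul (Real.exp C)
  have key := hasDerivAt_integral_of_dominated_loc_of_deriv_le
    (F := fun x u => G ν μ x u) (F' := fun x u => G ν (μ - 1) x u)
    (x₀ := t) (s := Metric.ball t (t / 2)) (bound := fun u => Real.exp C * (u ^ (-(μ - 1)) *
      Real.exp (-(t / 4 * u))))
    (Metric.ball_mem_nhds t (by linarith))
    (Eventually.of_forall fun x => G_aesm ν μ x)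
    (integrable_G hν0 hν1 hμ ht)
    (G_aesm ν (μ - 1) t)
    ?_ hbound ?_
  · have hD := key.2.const_mul (1 / π)
    have : HasDerivAt (fInv ν μ) ((1 / π) * ∫ u in Ioi (0 : ℝ), G ν (μ - 1) t u) t := hD
    rw [fInv_eq]
    exact this
  · rw [ae_restrict_iff' measurableSet_Ioi]
    filter_upwards with u hu x hx
    rw [Metric.mem_ball, Real.dist_eq, abs_sub_lt_iff] at hx
    rw [Real.norm_eq_abs]
    exact G_abs_le (μ - 1) hC (by linarith) hu
  · rw [ae_restrict_iff' measurableSet_Ioi]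
    filter_upwards with u hu x _
    exact hasDerivAt_G_param hu x

end FInvAux

open FInvAux in
theorem fInv_recurrence (ν μ : ℝ) (hν0 : 0 < ν) (hν1 : ν < 1) (hμ : μ < 1)
    (t : ℝ) (ht : 0 < t) :
    t * fInv ν (μ - 1) t = (μ - 1) * fInv ν μ t + ν * fInv ν (μ - ν) t ∧
    t * deriv (fInv ν μ) t = (μ - 1) * fInv ν μ t + ν * fInv ν (μ - ν) t := by
  have key := key_integral hν0 hν1 hμ ht
  have part1 : t * fInv ν (μ - 1) t = (μ - 1) * fInv ν μ t + ν * fInv ν (μ - ν) t := by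
    rw [fInv_eq, fInv_eq, fInv_eq]
    linear_combination (1 / π) * key
  refine ⟨part1, ?_⟩
  rw [(hasDerivAt_fInv hν0 hν1 hμ ht).deriv]
  exact part1
end

section
/- For α > 0, β > 0, λ ∈ ℝ, and s > 0 with s^α > |λ|, the Laplace transform of t^{β-1} E_{α,β}(λ t^α) equals s^{α-β}/(s^α − λ), where E_{α,β}(z) = ∑_{k=0}^∞ z^k / Γ(kα + β). -/
open Real MeasureTheory Set

noncomputable def mittagLeffler2 (α β z : ℝ) : ℝ :=
  ∑' k : ℕ, z ^ k / Real.Gamma (k * α + β)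

theorem laplace_mittagLeffler2 (α β lam : ℝ) (hα : 0 < α) (hβ : 0 < β) :
    ∀ s : ℝ, 0 < s → |lam| < s ^ α →
      ∫ t in Ioi (0 : ℝ),
          Real.exp (-s * t) * (t ^ (β - 1) * mittagLeffler2 α β (lam * t ^ α)) =
        s ^ (α - β) / (s ^ α - lam) := by
  intro s hs hlam
  have hsα : (0:ℝ) < s ^ α := rpow_pos_of_pos hs α
  set F : ℕ → ℝ → ℝ := fun k t =>
    (lam ^ k / Real.Gamma (k * α + β)) * (t ^ ((k : ℝ) * α + β - 1) * Real.exp (-(s * t)))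
    with hF
  have hγ : ∀ k : ℕ, 0 < (k : ℝ) * α + β := fun k => by positivity
  have hΓ : ∀ k : ℕ, 0 < Real.Gamma ((k : ℝ) * α + β) := fun k => Real.Gamma_pos_of_pos (hγ k)
  -- pointwise equality of integrands
  have hpt : EqOn (fun t => Real.exp (-s * t) * (t ^ (β - 1) * mittagLeffler2 α β (lam * t ^ α)))
      (fun t => ∑' k : ℕ, F k t) (Ioi 0) := by
    intro t ht
    simp only [mittagLeffler2]
    rw [← tsum_mul_left, ← tsum_mul_left]
    refine tsum_congr fun k => ?_
    have h1 : (lam * t ^ α) ^ k = lam ^ k * t ^ (α * (k:ℝ)) := by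
      rw [mul_pow, ← Real.rpow_natCast (t ^ α) k, ← Real.rpow_mul (le_of_lt ht)]
    have h2 : t ^ (β - 1) * t ^ (α * (k:ℝ)) = t ^ ((k:ℝ) * α + β - 1) := by
      rw [← Real.rpow_add ht]; ring_nf
    simp only [hF, h1]
    rw [show Real.exp (-s * t) * (t ^ (β - 1) * (lam ^ k * t ^ (α * (k:ℝ)) / Real.Gamma (↑k * α + β)))
        = (lam ^ k / Real.Gamma (↑k * α + β)) * ((t ^ (β - 1) * t ^ (α * (k:ℝ))) * Real.exp (-(s * t))) by
      rw [neg_mul]; ring, h2]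
  -- integrability of each term
  have hInt : ∀ k : ℕ, IntegrableOn (F k) (Ioi 0) := by
    intro k
    apply Integrable.const_mul
    have := integrableOn_rpow_mul_exp_neg_mul_rpow
      (p := 1) (s := (k:ℝ)*α+β-1) (b := s) (by linarith [hγ k]) (by norm_num) hs
    simpa [Real.rpow_one, neg_mul, IntegrableOn] using this
  -- value of each integral
  have hint : ∀ k : ℕ, ∫ t in Ioi (0:ℝ), F k t = lam ^ k * (1 / s) ^ ((k : ℝ) * α + β) := by
    intro k
    simp only [hF]
    rw [MeasureTheory.integral_const_mul, integral_rpow_mul_exp_neg_mul_Ioi (hγ k) hs]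
    field_simp [(hΓ k).ne']
  -- norm integrals
  have hnorm : ∀ k : ℕ, ∫ t in Ioi (0:ℝ), ‖F k t‖ = |lam| ^ k * (1 / s) ^ ((k : ℝ) * α + β) := by
    intro k
    have : ∀ t ∈ Ioi (0:ℝ), ‖F k t‖
        = (|lam| ^ k / Real.Gamma ((k:ℝ) * α + β)) * (t ^ ((k : ℝ) * α + β - 1) * Real.exp (-(s * t))) := by
      intro t ht
      simp only [hF, norm_mul, Real.norm_eq_abs, abs_div, abs_pow,
        abs_of_pos (hΓ k), abs_of_nonneg (Real.rpow_nonneg (le_of_lt ht) _),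
        abs_of_pos (Real.exp_pos _)]
    rw [setIntegral_congr_fun measurableSet_Ioi this,
      MeasureTheory.integral_const_mul, integral_rpow_mul_exp_neg_mul_Ioi (hγ k) hs]
    field_simp [(hΓ k).ne']
  have hinv : ∀ x : ℝ, (1 / s) ^ x = (s ^ x)⁻¹ := fun x => by
    rw [one_div, ← Real.inv_rpow hs.le]
  have hsplit : ∀ k : ℕ, (1 / s) ^ ((k : ℝ) * α + β) = ((1 / s) ^ α) ^ k * (1 / s) ^ β := by
    intro k
    rw [Real.rpow_add (by positivity), mul_comm (k:ℝ) α, Real.rpow_mul (by positivity),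
      Real.rpow_natCast]
  have hratio : |lam| * (1 / s) ^ α < 1 := by
    rw [hinv α, ← div_eq_mul_inv]
    exact (div_lt_one hsα).2 hlam
  have hsum : Summable fun k : ℕ => ∫ t in Ioi (0:ℝ), ‖F k t‖ := by
    simp only [hnorm]
    have : (fun k : ℕ => |lam| ^ k * (1 / s) ^ ((k : ℝ) * α + β))
        = fun k : ℕ => (|lam| * (1 / s) ^ α) ^ k * (1 / s) ^ β := by
      funext k; rw [hsplit k, mul_pow]; ring
    rw [this]
    exact (summable_geometric_of_lt_one (by positivity) hratio).mul_right _
  rw [setIntegral_congr_fun measurableSet_Ioi hpt,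
    ← MeasureTheory.integral_tsum_of_summable_integral_norm hInt hsum,
    tsum_congr hint]
  have hterm : ∀ k : ℕ, lam ^ k * (1 / s) ^ ((k : ℝ) * α + β)
      = (lam * (1 / s) ^ α) ^ k * (1 / s) ^ β := by
    intro k; rw [hsplit k, mul_pow]; ring
  rw [tsum_congr hterm, tsum_mul_right, tsum_geometric_of_abs_lt_one (by
    rw [abs_mul, abs_of_nonneg (Real.rpow_nonneg (by positivity) α)]; exact hratio)]
  have hne : s ^ α - lam ≠ 0 := by
    have : lam < s ^ α := lt_of_le_of_lt (le_abs_self lam) hlam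
    linarith
  rw [hinv α, hinv β, Real.rpow_sub hs]
  have h1 : (1 - lam * (s ^ α)⁻¹) = (s ^ α - lam) / s ^ α := by
    field_simp
  rw [h1, inv_div, div_mul_eq_mul_div, ← div_eq_mul_inv]
end

section
/- For λ > 0 and s > max(λ, 1), the Laplace transform of the Volterra function ν(λt) = ∫_0^∞ (λt)^u / Γ(u+1) du equals 1/(s · ln(s/λ)). -/
open Real MeasureTheory Set

noncomputable def volterraNu (x : ℝ) : ℝ :=
  ∫ u in Ioi (0 : ℝ), x ^ u / Real.Gamma (u + 1)

lemma integrableOn_rpow_mul_exp_neg_mul {a r : ℝ} (ha : 0 < a) (hr : 0 < r) :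
    IntegrableOn (fun t : ℝ => t ^ (a - 1) * Real.exp (-(r * t))) (Ioi 0) := by
  have h0 : IntegrableOn (fun x : ℝ => Real.exp (-(r * x)) * (r * x) ^ (a - 1)) (Ioi 0) := by
    have := (integrableOn_Ioi_comp_mul_left_iff
      (fun x : ℝ => Real.exp (-x) * x ^ (a - 1)) 0 hr).mpr
    simpa [mul_zero] using this (by simpa [mul_zero] using Real.GammaIntegral_convergent ha)
  refine IntegrableOn.congr_fun (h0.const_mul (r ^ (1 - a))) (fun x hx => ?_) measurableSet_Ioi
  have hx0 : (0 : ℝ) < x := hx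
  rw [Real.mul_rpow hr.le hx0.le]
  have h1 : r ^ (1 - a) * r ^ (a - 1) = 1 := by
    rw [← Real.rpow_add hr]; norm_num
  calc r ^ (1 - a) * (Real.exp (-(r * x)) * (r ^ (a - 1) * x ^ (a - 1)))
      = (r ^ (1 - a) * r ^ (a - 1)) * (x ^ (a - 1) * Real.exp (-(r * x))) := by ring
    _ = x ^ (a - 1) * Real.exp (-(r * x)) := by rw [h1, one_mul]

/-- The inner `t`-integral: for `u > 0`. -/
lemma inner_integral_eq (lam s u : ℝ) (hlam : 0 < lam) (hs : 0 < s) (hu : 0 < u) :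
    ∫ t in Ioi (0 : ℝ), Real.exp (-s * t) * ((lam * t) ^ u / Real.Gamma (u + 1)) =
      lam ^ u * (1 / s) ^ (u + 1) := by
  have hG : 0 < Real.Gamma (u + 1) := Real.Gamma_pos_of_pos (by linarith)
  have h1 : ∀ t ∈ Ioi (0 : ℝ),
      Real.exp (-s * t) * ((lam * t) ^ u / Real.Gamma (u + 1)) =
        (lam ^ u / Real.Gamma (u + 1)) * (t ^ ((u + 1) - 1) * Real.exp (-(s * t))) := by
    intro t ht
    have ht0 : (0 : ℝ) < t := ht
    rw [Real.mul_rpow hlam.le ht0.le]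
    have : (u + 1) - 1 = u := by ring
    rw [this, neg_mul]
    ring
  rw [setIntegral_congr_fun measurableSet_Ioi h1, integral_const_mul,
    Real.integral_rpow_mul_exp_neg_mul_Ioi (by linarith : (0:ℝ) < u + 1) hs]
  field_simp

theorem laplace_volterraNu (lam : ℝ) (hlam : 0 < lam) :
    ∀ s : ℝ, max lam 1 < s →
      ∫ t in Ioi (0 : ℝ), Real.exp (-s * t) * volterraNu (lam * t) =
        1 / (s * Real.log (s / lam)) := by
  intro s hmax
  have hs1 : (1 : ℝ) < s := lt_of_le_of_lt (le_max_right _ _) hmax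
  have hs : (0 : ℝ) < s := by linarith
  have hls : lam < s := lt_of_le_of_lt (le_max_left _ _) hmax
  have hrat : (1 : ℝ) < s / lam := (one_lt_div hlam).mpr hls
  have hb : 0 < Real.log (s / lam) := Real.log_pos hrat
  set b : ℝ := Real.log (s / lam) with hbdef
  -- the double integrand
  set f : ℝ → ℝ → ℝ :=
    fun t u => Real.exp (-s * t) * ((lam * t) ^ u / Real.Gamma (u + 1)) with hf
  -- Step A: pull the exponential inside the inner integral
  have stepA : ∀ t : ℝ, Real.exp (-s * t) * volterraNu (lam * t) =
      ∫ u in Ioi (0 : ℝ), f t u := by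
    intro t
    rw [volterraNu, ← integral_const_mul]
  -- measurability of the uncurried function on the product
  have hmeas : AEStronglyMeasurable (fun p : ℝ × ℝ => f p.1 p.2)
      ((volume.restrict (Ioi (0:ℝ))).prod (volume.restrict (Ioi (0:ℝ)))) := by
    rw [Measure.prod_restrict]
    refine ContinuousOn.aestronglyMeasurable ?_ (measurableSet_Ioi.prod measurableSet_Ioi)
    intro p hp
    obtain ⟨hp1, hp2⟩ := hp
    have hp1' : (0 : ℝ) < p.1 := hp1
    have hp2' : (0 : ℝ) < p.2 := hp2
    apply ContinuousAt.continuousWithinAt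
    have hc1 : ContinuousAt (fun p : ℝ × ℝ => Real.exp (-s * p.1)) p := by
      fun_prop
    have hc2 : ContinuousAt (fun p : ℝ × ℝ => (lam * p.1) ^ p.2) p := by
      refine ContinuousAt.rpow (by fun_prop) (by fun_prop) (Or.inl (by positivity))
    have hc3 : ContinuousAt (fun p : ℝ × ℝ => Real.Gamma (p.2 + 1)) p := by
      have hG : ContinuousAt Real.Gamma (p.2 + 1) := by
        refine (Real.differentiableAt_Gamma ?_).continuousAt
        intro m
        have : (0 : ℝ) < p.2 + 1 := by linarith
        intro h
        rw [h] at this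
        have : (0:ℝ) ≤ (m : ℝ) := Nat.cast_nonneg m
        linarith
      exact ContinuousAt.comp (g := Real.Gamma) (f := fun p : ℝ × ℝ => p.2 + 1) (x := p)
        hG (by fun_prop)
    have hGne : Real.Gamma (p.2 + 1) ≠ 0 :=
      (Real.Gamma_pos_of_pos (by linarith)).ne'
    exact hc1.mul (hc2.div hc3 hGne)
  -- integrability in t for each u > 0
  have hint_t : ∀ u : ℝ, 0 < u →
      IntegrableOn (fun t => f t u) (Ioi (0:ℝ)) := by
    intro u hu
    have h0 := integrableOn_rpow_mul_exp_neg_mul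
      (show (0:ℝ) < u + 1 by linarith) hs
    refine IntegrableOn.congr_fun (h0.const_mul (lam ^ u / Real.Gamma (u + 1)))
      (fun t ht => ?_) measurableSet_Ioi
    have ht0 : (0 : ℝ) < t := ht
    simp only [hf]
    rw [Real.mul_rpow hlam.le ht0.le]
    have : (u + 1) - 1 = u := by ring
    rw [this, neg_mul]
    ring
  -- nonnegativity of f for t, u > 0
  have hf_nonneg : ∀ t ∈ Ioi (0:ℝ), ∀ u ∈ Ioi (0:ℝ), 0 ≤ f t u := by
    intro t ht u hu
    have hu0 : (0:ℝ) < u := hu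
    have hG : 0 < Real.Gamma (u + 1) := Real.Gamma_pos_of_pos (by linarith)
    have ht0 : (0:ℝ) < t := ht
    have h2 : (0:ℝ) ≤ (lam * t) ^ u := Real.rpow_nonneg (mul_nonneg hlam.le ht0.le) u
    exact mul_nonneg (Real.exp_pos _).le (div_nonneg h2 hG.le)
  -- value of the inner t-integral
  have hval : ∀ u : ℝ, 0 < u →
      (∫ t in Ioi (0:ℝ), f t u) = (1 / s) * Real.exp (-(b * u)) := by
    intro u hu
    rw [inner_integral_eq lam s u hlam hs hu]
    have hinv : (1 / s : ℝ) ^ (u + 1) = (1 / s) ^ u * (1 / s) := by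
      rw [Real.rpow_add (by positivity), Real.rpow_one]
    rw [hinv]
    have hls' : lam ^ u * (1 / s) ^ u = (lam / s) ^ u := by
      rw [← Real.mul_rpow hlam.le (by positivity)]
      congr 1
      field_simp
    have hexp : (lam / s : ℝ) ^ u = Real.exp (-(b * u)) := by
      rw [Real.rpow_def_of_pos (by positivity)]
      congr 1
      rw [hbdef, Real.log_div hs.ne' hlam.ne', Real.log_div hlam.ne' hs.ne']
      ring
    rw [← mul_assoc, hls', hexp]
    ring
  -- Fubini: integrability of the uncurried function
  have hInt : Integrable (Function.uncurry f)
      ((volume.restrict (Ioi (0:ℝ))).prod (volume.restrict (Ioi (0:ℝ)))) := by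
    refine (integrable_prod_iff' hmeas).mpr ⟨?_, ?_⟩
    · filter_upwards [ae_restrict_mem measurableSet_Ioi] with u hu
      exact hint_t u hu
    · have heq : (fun u => (1 / s) * Real.exp (-(b * u)))
          =ᵐ[volume.restrict (Ioi (0:ℝ))] fun u => ∫ t in Ioi (0:ℝ), ‖f t u‖ := by
        filter_upwards [ae_restrict_mem measurableSet_Ioi] with u hu
        have h3 : (∫ t in Ioi (0:ℝ), ‖f t u‖) = ∫ t in Ioi (0:ℝ), f t u := by
          refine integral_congr_ae ?_
          filter_upwards [ae_restrict_mem measurableSet_Ioi] with t ht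
          exact Real.norm_of_nonneg (hf_nonneg t ht u hu)
        rw [h3, hval u hu]
      have hg : Integrable (fun u => (1 / s) * Real.exp (-(b * u)))
          (volume.restrict (Ioi (0:ℝ))) :=
        (IntegrableOn.congr_fun (exp_neg_integrableOn_Ioi 0 hb)
          (fun u _ => by rw [neg_mul]) measurableSet_Ioi).const_mul _
      exact hg.congr heq
  -- swap the integrals
  have hswap : (∫ t in Ioi (0:ℝ), ∫ u in Ioi (0:ℝ), f t u) =
      ∫ u in Ioi (0:ℝ), ∫ t in Ioi (0:ℝ), f t u :=
    integral_integral_swap hInt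
  calc ∫ t in Ioi (0:ℝ), Real.exp (-s * t) * volterraNu (lam * t)
      = ∫ t in Ioi (0:ℝ), ∫ u in Ioi (0:ℝ), f t u := by
        exact integral_congr_ae (Filter.Eventually.of_forall fun t => stepA t)
    _ = ∫ u in Ioi (0:ℝ), ∫ t in Ioi (0:ℝ), f t u := hswap
    _ = ∫ u in Ioi (0:ℝ), (1 / s) * Real.exp (-(b * u)) := by
        refine integral_congr_ae ?_
        filter_upwards [ae_restrict_mem measurableSet_Ioi] with u hu
        exact hval u hu
    _ = (1 / s) * ∫ u in Ioi (0:ℝ), Real.exp (-(b * u)) := integral_const_mul _ _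
    _ = (1 / s) * (1 / b) := by
        congr 1
        have h1 : (∫ u in Ioi (0:ℝ), Real.exp (-(b * u))) =
            ∫ u in Ioi (0:ℝ), u ^ ((1:ℝ) - 1) * Real.exp (-(b * u)) := by
          refine integral_congr_ae (Filter.Eventually.of_forall fun u => ?_)
          norm_num
        rw [h1, Real.integral_rpow_mul_exp_neg_mul_Ioi one_pos hb,
          Real.rpow_one, Real.Gamma_one, mul_one]
    _ = 1 / (s * b) := by
        rw [div_mul_div_comm, one_mul]
end

section
/- For ρ > 0, t > 0: t · ν(t, ρ) = (ρ+1) ν(t, ρ+1) + μ(t, 1, ρ+1), where ν(t,α) = ∫_0^∞ t^{u+α}/Γ(u+α+1) du and μ(t,β,α) = ∫_0^∞ u^β t^{u+α} / (Γ(β+1)Γ(u+α+1)) du. -/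
open Real MeasureTheory Set

noncomputable def volterraNu2 (t α : ℝ) : ℝ :=
  ∫ u in Ioi (0 : ℝ), t ^ (u + α) / Real.Gamma (u + α + 1)

noncomputable def volterraMu (t β α : ℝ) : ℝ :=
  ∫ u in Ioi (0 : ℝ), u ^ β * t ^ (u + α) / (Real.Gamma (β + 1) * Real.Gamma (u + α + 1))

/-- Lower bound for the Gamma function: `Γ x ≥ a ^ x * exp (-(2*a))` for `x, a ≥ 1`. -/
lemma gamma_lower_bound {x a : ℝ} (hx : 1 ≤ x) (ha : 1 ≤ a) :
    a ^ x * Real.exp (-(2 * a)) ≤ Real.Gamma x := by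
  have hx0 : (0 : ℝ) < x := by linarith
  have ha0 : (0 : ℝ) < a := by linarith
  rw [Real.Gamma_eq_integral hx0]
  have hsub : Ioc a (2 * a) ⊆ Ioi (0 : ℝ) := fun s hs => lt_trans ha0 hs.1
  have hint : IntegrableOn (fun s : ℝ => Real.exp (-s) * s ^ (x - 1)) (Ioi 0) :=
    Real.GammaIntegral_convergent hx0
  have h1 : (∫ s in Ioc a (2 * a), Real.exp (-s) * s ^ (x - 1)) ≤
      ∫ s in Ioi (0 : ℝ), Real.exp (-s) * s ^ (x - 1) := by
    apply setIntegral_mono_set hint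
    · filter_upwards [ae_restrict_mem measurableSet_Ioi] with s hs
      have hs' : (0:ℝ) < s := hs
      positivity
    · exact HasSubset.Subset.eventuallyLE hsub
  refine le_trans ?_ h1
  have h2 : (∫ s in Ioc a (2 * a), (Real.exp (-(2 * a)) * a ^ (x - 1))) ≤
      ∫ s in Ioc a (2 * a), Real.exp (-s) * s ^ (x - 1) := by
    apply setIntegral_mono_on
    · exact integrableOn_const measure_Ioc_lt_top.ne
    · exact hint.mono_set hsub
    · exact measurableSet_Ioc
    · intro s hs
      have hs1 : a ≤ s := le_of_lt hs.1
      have hs2 : s ≤ 2 * a := hs.2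
      apply mul_le_mul
      · exact Real.exp_le_exp.2 (by linarith)
      · exact Real.rpow_le_rpow (le_of_lt ha0) hs1 (by linarith)
      · positivity
      · positivity
  refine le_trans ?_ h2
  rw [setIntegral_const, measureReal_def, Real.volume_Ioc, smul_eq_mul]
  have hmeas : (2 * a - a) = a := by ring
  rw [hmeas, ENNReal.toReal_ofReal (le_of_lt ha0)]
  have hax : a ^ x = a * a ^ (x - 1) := by
    nth_rewrite 1 [show x = 1 + (x - 1) by ring]
    rw [Real.rpow_add ha0, Real.rpow_one]
  rw [hax]
  ring_nf
  exact le_refl _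


/-- Pointwise exponential bound for the Volterra integrand. -/
lemma volterra_integrand_bound {t α : ℝ} (ht : 0 < t) (hα : 0 < α) {u : ℝ} (hu : 0 < u) :
    t ^ (u + α) / Real.Gamma (u + α + 1) ≤
      t ^ α * Real.exp (2 * (Real.exp 1 * max t 1)) / (Real.exp 1 * max t 1) ^ (α + 1)
        * Real.exp (-u) := by
  set a : ℝ := Real.exp 1 * max t 1 with ha_def
  have hmax : (1 : ℝ) ≤ max t 1 := le_max_right t 1
  have he1 : (1 : ℝ) ≤ Real.exp 1 := by
    have := Real.add_one_le_exp (1 : ℝ); linarith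
  have ha1 : (1 : ℝ) ≤ a := by
    calc (1:ℝ) = 1 * 1 := by ring
    _ ≤ Real.exp 1 * max t 1 := by
        apply mul_le_mul he1 hmax (by norm_num) (by linarith)
  have ha0 : (0 : ℝ) < a := by linarith
  have hx1 : (1 : ℝ) ≤ u + α + 1 := by linarith
  have hG : a ^ (u + α + 1) * Real.exp (-(2 * a)) ≤ Real.Gamma (u + α + 1) :=
    gamma_lower_bound hx1 ha1
  have hGpos : 0 < Real.Gamma (u + α + 1) := Real.Gamma_pos_of_pos (by linarith)
  have hdenpos : 0 < a ^ (u + α + 1) * Real.exp (-(2 * a)) := by positivity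
  have step1 : t ^ (u + α) / Real.Gamma (u + α + 1) ≤
      t ^ (u + α) / (a ^ (u + α + 1) * Real.exp (-(2 * a))) :=
    div_le_div_of_nonneg_left (by positivity) hdenpos hG
  refine step1.trans ?_
  -- rewrite everything
  have hta : t / a ≤ Real.exp (-1) := by
    have h1 : t ≤ max t 1 := le_max_left t 1
    have h2 : Real.exp 1 * t ≤ a := by
      rw [ha_def]
      apply mul_le_mul_of_nonneg_left h1 (by positivity)
    rw [Real.exp_neg, div_le_iff₀ ha0, inv_mul_eq_div, le_div_iff₀ (Real.exp_pos 1)]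
    linarith
  have hpow : (t / a) ^ u ≤ Real.exp (-u) := by
    calc (t / a) ^ u ≤ (Real.exp (-1)) ^ u :=
      Real.rpow_le_rpow (by positivity) hta (le_of_lt hu)
    _ = Real.exp (-u) := by rw [← Real.exp_mul]; ring_nf
  have hexpand : t ^ (u + α) / (a ^ (u + α + 1) * Real.exp (-(2 * a))) =
      t ^ α * Real.exp (2 * a) / a ^ (α + 1) * (t / a) ^ u := by
    rw [show u + α + 1 = u + (α + 1) by ring, Real.rpow_add ht, Real.rpow_add ha0 u (α + 1),
      Real.div_rpow (le_of_lt ht) (le_of_lt ha0), Real.exp_neg]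
    have h1 : a ^ (u:ℝ) ≠ 0 := by positivity
    have h2 : a ^ (α + 1:ℝ) ≠ 0 := by positivity
    have h3 : Real.exp (2 * a) ≠ 0 := Real.exp_ne_zero _
    field_simp
  rw [hexpand]
  apply mul_le_mul_of_nonneg_left hpow (by positivity)

lemma volterra_continuousOn {t α : ℝ} (ht : 0 < t) (hα : 0 < α) :
    ContinuousOn (fun u : ℝ => t ^ (u + α) / Real.Gamma (u + α + 1)) (Ioi 0) := by
  intro u hu
  have hu0 : (0 : ℝ) < u := hu
  apply ContinuousAt.continuousWithinAt
  apply ContinuousAt.div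
  · exact (Real.continuousAt_const_rpow (ne_of_gt ht)).comp
      ((continuous_id.add continuous_const).continuousAt)
  · have : ∀ m : ℕ, u + α + 1 ≠ -m := by
      intro m
      have : (0:ℝ) ≤ m := Nat.cast_nonneg m
      nlinarith
    have hg : ContinuousAt Real.Gamma (u + α + 1) :=
      (Real.differentiableAt_Gamma this).continuousAt
    have hf : ContinuousAt (fun v : ℝ => v + α + 1) u := by fun_prop
    exact ContinuousAt.comp (x := u) (f := fun v : ℝ => v + α + 1) hg hf
  · exact ne_of_gt (Real.Gamma_pos_of_pos (by linarith))

lemma volterra_nu_integrable {t α : ℝ} (ht : 0 < t) (hα : 0 < α) :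
    IntegrableOn (fun u : ℝ => t ^ (u + α) / Real.Gamma (u + α + 1)) (Ioi 0) := by
  set C : ℝ := t ^ α * Real.exp (2 * (Real.exp 1 * max t 1))
      / (Real.exp 1 * max t 1) ^ (α + 1 : ℝ) with hC
  apply Integrable.mono' (g := fun u => C * Real.exp (-1 * u))
    (((exp_neg_integrableOn_Ioi 0 one_pos)).const_mul C)
    ((volterra_continuousOn ht hα).aestronglyMeasurable measurableSet_Ioi)
  rw [ae_restrict_iff' measurableSet_Ioi]
  filter_upwards with u hu
  have hu0 : (0:ℝ) < u := hu
  have hGpos : 0 < Real.Gamma (u + α + 1) := Real.Gamma_pos_of_pos (by linarith)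
  rw [Real.norm_eq_abs, abs_of_nonneg (by positivity)]
  have := volterra_integrand_bound ht hα hu0
  calc t ^ (u + α) / Real.Gamma (u + α + 1) ≤ C * Real.exp (-u) := this
  _ = C * Real.exp (-1 * u) := by ring_nf

lemma volterra_mu_integrable {t α : ℝ} (ht : 0 < t) (hα : 0 < α) :
    IntegrableOn (fun u : ℝ => u * (t ^ (u + α) / Real.Gamma (u + α + 1))) (Ioi 0) := by
  set C : ℝ := t ^ α * Real.exp (2 * (Real.exp 1 * max t 1))
      / (Real.exp 1 * max t 1) ^ (α + 1 : ℝ) with hC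
  have hC0 : 0 ≤ C := by positivity
  apply Integrable.mono' (g := fun u => (2 * C) * Real.exp (-(1/2) * u))
    (((exp_neg_integrableOn_Ioi 0 (by norm_num : (0:ℝ) < 1/2))).const_mul (2 * C))
    ((continuousOn_id.mul (volterra_continuousOn ht hα)).aestronglyMeasurable
      measurableSet_Ioi)
  rw [ae_restrict_iff' measurableSet_Ioi]
  filter_upwards with u hu
  have hu0 : (0:ℝ) < u := hu
  have hGpos : 0 < Real.Gamma (u + α + 1) := Real.Gamma_pos_of_pos (by linarith)
  rw [Real.norm_eq_abs]
  change |u * (t ^ (u + α) / Real.Gamma (u + α + 1))| ≤ _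
  rw [abs_of_nonneg (mul_nonneg hu0.le (by positivity))]
  have hb := volterra_integrand_bound ht hα hu0
  have hue : u ≤ 2 * Real.exp (u / 2) := by
    have := Real.add_one_le_exp (u / 2); linarith
  have hfnn : 0 ≤ t ^ (u + α) / Real.Gamma (u + α + 1) := by positivity
  calc u * (t ^ (u + α) / Real.Gamma (u + α + 1))
      ≤ (2 * Real.exp (u / 2)) * (C * Real.exp (-u)) := by
        apply mul_le_mul hue hb hfnn (by positivity)
  _ = (2 * C) * Real.exp (-(1/2) * u) := by
        rw [show -(1/2) * u = u / 2 + -u by ring, Real.exp_add]; ring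

theorem volterra_identity (ρ t : ℝ) (hρ : 0 < ρ) (ht : 0 < t) :
    t * volterraNu2 t ρ = (ρ + 1) * volterraNu2 t (ρ + 1) + volterraMu t 1 (ρ + 1) := by
  have hρ1 : (0:ℝ) < ρ + 1 := by linarith
  have key : ∀ u ∈ Ioi (0:ℝ),
      t * (t ^ (u + ρ) / Real.Gamma (u + ρ + 1)) =
        (ρ + 1) * (t ^ (u + (ρ + 1)) / Real.Gamma (u + (ρ + 1) + 1)) +
          u ^ (1:ℝ) * t ^ (u + (ρ + 1)) /
            (Real.Gamma ((1:ℝ) + 1) * Real.Gamma (u + (ρ + 1) + 1)) := by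
    intro u hu
    have hu0 : (0:ℝ) < u := hu
    have hΓpos : 0 < Real.Gamma (u + ρ + 1) := Real.Gamma_pos_of_pos (by linarith)
    have hrec : Real.Gamma (u + (ρ + 1) + 1) = (u + ρ + 1) * Real.Gamma (u + ρ + 1) := by
      rw [show u + (ρ + 1) + 1 = (u + ρ + 1) + 1 by ring,
        Real.Gamma_add_one (by positivity)]
    have hpow : t ^ (u + (ρ + 1)) = t ^ (u + ρ) * t := by
      rw [show u + (ρ + 1) = (u + ρ) + 1 by ring, Real.rpow_add ht, Real.rpow_one]
    rw [Real.rpow_one, show (1:ℝ) + 1 = 2 by norm_num, Real.Gamma_two, hrec, hpow]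
    have hne : Real.Gamma (u + ρ + 1) ≠ 0 := ne_of_gt hΓpos
    have hne2 : u + ρ + 1 ≠ 0 := by positivity
    field_simp
    ring
  have hg_int : IntegrableOn
      (fun u : ℝ => t ^ (u + (ρ + 1)) / Real.Gamma (u + (ρ + 1) + 1)) (Ioi 0) :=
    volterra_nu_integrable ht hρ1
  have hh_int : IntegrableOn
      (fun u : ℝ => u ^ (1:ℝ) * t ^ (u + (ρ + 1)) /
        (Real.Gamma ((1:ℝ) + 1) * Real.Gamma (u + (ρ + 1) + 1))) (Ioi 0) := by
    apply (volterra_mu_integrable ht hρ1).congr_fun _ measurableSet_Ioi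
    intro u hu
    simp only [Real.rpow_one, show (1:ℝ) + 1 = 2 by norm_num, Real.Gamma_two, one_mul,
      mul_div_assoc]
  unfold volterraNu2 volterraMu
  calc t * ∫ u in Ioi (0:ℝ), t ^ (u + ρ) / Real.Gamma (u + ρ + 1)
      = ∫ u in Ioi (0:ℝ), t * (t ^ (u + ρ) / Real.Gamma (u + ρ + 1)) := by
        rw [MeasureTheory.integral_const_mul]
  _ = ∫ u in Ioi (0:ℝ),
        ((ρ + 1) * (t ^ (u + (ρ + 1)) / Real.Gamma (u + (ρ + 1) + 1)) +
          u ^ (1:ℝ) * t ^ (u + (ρ + 1)) /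
            (Real.Gamma ((1:ℝ) + 1) * Real.Gamma (u + (ρ + 1) + 1))) :=
      setIntegral_congr_fun measurableSet_Ioi key
  _ = (∫ u in Ioi (0:ℝ), (ρ + 1) * (t ^ (u + (ρ + 1)) / Real.Gamma (u + (ρ + 1) + 1))) +
        ∫ u in Ioi (0:ℝ), u ^ (1:ℝ) * t ^ (u + (ρ + 1)) /
          (Real.Gamma ((1:ℝ) + 1) * Real.Gamma (u + (ρ + 1) + 1)) :=
      MeasureTheory.integral_add (hg_int.const_mul _) hh_int
  _ = (ρ + 1) * (∫ u in Ioi (0:ℝ), t ^ (u + (ρ + 1)) / Real.Gamma (u + (ρ + 1) + 1)) +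
        ∫ u in Ioi (0:ℝ), u ^ (1:ℝ) * t ^ (u + (ρ + 1)) /
          (Real.Gamma ((1:ℝ) + 1) * Real.Gamma (u + (ρ + 1) + 1)) := by
      rw [MeasureTheory.integral_const_mul]
end
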